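/- For bounded linear operators X, Y on a complex Hilbert space H and t ∈ [0,1], the weighted numerical radius of the off-diagonal operator matrix [[0, X], [Y, 0]] equals sup over θ ∈ ℝ of (1/2)·‖(1-2t)(e^{-iθ}X + e^{iθ}Y*) + (e^{iθ}X + e^{-iθ}Y*)‖. -/

import Mathlib

open ContinuousLinearMap in
noncomputable def nr {H : Type*} [NormedAddCommGroup H] [InnerProductSpace ℂ H]
    (T : H →L[ℂ] H) : ℝ :=
  ⨆ x : {x : H // ‖x‖ = 1}, ‖(inner ℂ (T x) (x : H) : ℂ)‖

open ContinuousLinearMap in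
noncomputable def wnr {H : Type*} [NormedAddCommGroup H] [InnerProductSpace ℂ H]
    [CompleteSpace H] (t : ℝ) (T : H →L[ℂ] H) : ℝ :=
  nr ((1 - 2*t) • adjoint T + T)

/-- The 2×2 block operator matrix [[A, B], [C, D]] acting on the Hilbert space H ⊕ H. -/
noncomputable def blk {H : Type*} [NormedAddCommGroup H] [InnerProductSpace ℂ H]
    (A B C D : H →L[ℂ] H) : WithLp 2 (H × H) →L[ℂ] WithLp 2 (H × H) :=
  (((WithLp.prodContinuousLinearEquiv 2 ℂ H H).symm :
      (H × H) →L[ℂ] WithLp 2 (H × H)).comp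
    (((A.coprod B).prod (C.coprod D)).comp
      ((WithLp.prodContinuousLinearEquiv 2 ℂ H H : WithLp 2 (H × H) ≃L[ℂ] (H × H)) :
        WithLp 2 (H × H) →L[ℂ] (H × H))))

open ContinuousLinearMap

section NRBasic
variable {E : Type*} [NormedAddCommGroup E] [InnerProductSpace ℂ E]

local notation "⟪" x ", " y "⟫" => @inner ℂ _ _ x y

lemma nr_inner_le_opNorm (T : E →L[ℂ] E) (x : {x : E // ‖x‖ = 1}) :
    ‖(⟪T x, (x : E)⟫ : ℂ)‖ ≤ ‖T‖ := by
  calc ‖(⟪T x, (x : E)⟫ : ℂ)‖ ≤ ‖T (x : E)‖ * ‖(x : E)‖ := norm_inner_le_norm _ _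
    _ ≤ ‖T‖ * ‖(x : E)‖ * ‖(x : E)‖ := by gcongr; exact T.le_opNorm _
    _ = ‖T‖ := by rw [x.2]; ring

lemma nr_nonneg (T : E →L[ℂ] E) : 0 ≤ nr T := Real.iSup_nonneg fun _ => norm_nonneg _

lemma nr_le_opNorm (T : E →L[ℂ] E) : nr T ≤ ‖T‖ :=
  Real.iSup_le (nr_inner_le_opNorm T) (norm_nonneg T)

lemma le_nr (T : E →L[ℂ] E) (x : E) (hx : ‖x‖ = 1) : ‖(⟪T x, x⟫ : ℂ)‖ ≤ nr T :=
  le_ciSup (f := fun x : {x : E // ‖x‖ = 1} => ‖(⟪T (x : E), (x : E)⟫ : ℂ)‖)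
    ⟨‖T‖, by rintro r ⟨x, rfl⟩; exact nr_inner_le_opNorm T x⟩ ⟨x, hx⟩

lemma inner_le_nr_sq (T : E →L[ℂ] E) (z : E) : ‖(⟪T z, z⟫ : ℂ)‖ ≤ nr T * ‖z‖ ^ 2 := by
  rcases eq_or_ne z 0 with rfl | hz
  · simp
  · have hz' : ‖z‖ ≠ 0 := norm_ne_zero_iff.2 hz
    have hu : ‖(‖z‖⁻¹ • z : E)‖ = 1 := by
      rw [norm_smul, norm_inv, norm_norm, inv_mul_cancel₀ hz']
    have h := le_nr T _ hu
    have hsm : (‖z‖⁻¹ • z : E) = ((‖z‖⁻¹ : ℝ) : ℂ) • z := (Complex.coe_smul _ _).symm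
    rw [hsm, map_smul, inner_smul_left, inner_smul_right] at h
    rw [norm_mul, norm_mul, RCLike.norm_conj] at h
    simp only [Complex.norm_real, norm_inv, norm_norm] at h
    have h2 : ‖z‖⁻¹ * (‖z‖⁻¹ * ‖(⟪T z, z⟫ : ℂ)‖) ≤ nr T := h
    have h3 : ‖(⟪T z, z⟫ : ℂ)‖ = ‖z‖^2 * (‖z‖⁻¹ * (‖z‖⁻¹ * ‖(⟪T z, z⟫ : ℂ)‖)) := by
      field_simp
    rw [h3]
    calc ‖z‖^2 * (‖z‖⁻¹ * (‖z‖⁻¹ * ‖(⟪T z, z⟫ : ℂ)‖)) ≤ ‖z‖^2 * nr T := by gcongr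
      _ = nr T * ‖z‖^2 := by ring

end NRBasic

section SA
variable {E : Type*} [NormedAddCommGroup E] [InnerProductSpace ℂ E] [CompleteSpace E]
local notation "⟪" x ", " y "⟫" => @inner ℂ _ _ x y

lemma re_inner_le_nr (T : E →L[ℂ] E) (hT : IsSelfAdjoint T) (x y : E) :
    (⟪T x, y⟫ : ℂ).re ≤ nr T * (‖x‖ ^ 2 + ‖y‖ ^ 2) / 2 := by
  have hpolar : (⟪T (x + y), x + y⟫ - ⟪T (x - y), x - y⟫ : ℂ) = 4 * (⟪T x, y⟫ : ℂ).re := by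
    have hsym : (⟪T y, x⟫ : ℂ) = (starRingEnd ℂ) ⟪T x, y⟫ := by
      rw [← hT.adjoint_eq, adjoint_inner_left, ← inner_conj_symm, hT.adjoint_eq]
    simp only [map_add, map_sub, inner_add_left, inner_add_right, inner_sub_left,
      inner_sub_right, hsym]
    have h := Complex.add_conj (⟪T x, y⟫ : ℂ)
    push_cast at h
    linear_combination 2 * h
  have h1 := inner_le_nr_sq T (x + y)
  have h2 := inner_le_nr_sq T (x - y)
  have hre : 4 * (⟪T x, y⟫ : ℂ).re ≤
      ‖(⟪T (x + y), x + y⟫ : ℂ)‖ + ‖(⟪T (x - y), x - y⟫ : ℂ)‖ := by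
    have h4 : (4 : ℝ) * (⟪T x, y⟫ : ℂ).re =
        ((⟪T (x + y), x + y⟫ - ⟪T (x - y), x - y⟫ : ℂ)).re := by
      rw [hpolar]; simp
    rw [h4]
    calc ((⟪T (x + y), x + y⟫ - ⟪T (x - y), x - y⟫ : ℂ)).re
        ≤ ‖(⟪T (x + y), x + y⟫ - ⟪T (x - y), x - y⟫ : ℂ)‖ := Complex.re_le_norm _
      _ ≤ _ := norm_sub_le _ _
  have hpar := parallelogram_law_with_norm ℂ x y
  have hpar' : ‖x + y‖ ^ 2 + ‖x - y‖ ^ 2 = 2 * (‖x‖ ^ 2 + ‖y‖ ^ 2) := by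
    simpa [sq] using hpar
  have hmul : nr T * (‖x + y‖ ^ 2 + ‖x - y‖ ^ 2) = nr T * (2 * (‖x‖ ^ 2 + ‖y‖ ^ 2)) := by
    rw [hpar']
  linarith

lemma IsSelfAdjoint.norm_le_nr (T : E →L[ℂ] E) (hT : IsSelfAdjoint T) : ‖T‖ ≤ nr T := by
  refine opNorm_le_bound _ (nr_nonneg T) fun x => ?_
  rcases eq_or_ne (T x) 0 with h0 | h0
  · rw [h0, norm_zero]
    exact mul_nonneg (nr_nonneg T) (norm_nonneg x)
  · have hx : x ≠ 0 := by rintro rfl; simp at h0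
    have hxn : (0:ℝ) < ‖x‖ := norm_pos_iff.2 hx
    have hTxn : (0:ℝ) < ‖T x‖ := norm_pos_iff.2 h0
    set y : E := ((‖x‖ / ‖T x‖ : ℝ) : ℂ) • T x with hy
    have hyn : ‖y‖ = ‖x‖ := by
      rw [hy, norm_smul, Complex.norm_real, Real.norm_eq_abs,
        abs_of_nonneg (by positivity), div_mul_cancel₀ _ hTxn.ne']
    have hre : (⟪T x, y⟫ : ℂ).re = ‖x‖ * ‖T x‖ := by
      have hself : (⟪T x, T x⟫ : ℂ).re = ‖T x‖ ^ 2 := by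
        exact_mod_cast congrArg Complex.re (inner_self_eq_norm_sq_to_K (𝕜 := ℂ) (T x))
      rw [hy, inner_smul_right, Complex.re_ofReal_mul, hself]
      field_simp
    have hkey := re_inner_le_nr T hT x y
    rw [hre, hyn] at hkey
    nlinarith
end SA
section Main
variable {E : Type*} [NormedAddCommGroup E] [InnerProductSpace ℂ E] [CompleteSpace E]
local notation "⟪" x ", " y "⟫" => @inner ℂ _ _ x y

lemma exp_norm_one (z : ℂ) (hz : z.re = 0) : ‖Complex.exp z‖ = 1 := by
  rw [Complex.norm_exp, hz, Real.exp_zero]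

lemma conj_exp_theta (θ : ℝ) :
    (starRingEnd ℂ) (Complex.exp ((θ:ℂ) * Complex.I)) = Complex.exp (-(θ:ℂ) * Complex.I) := by
  rw [← Complex.exp_conj]; congr 1; simp [Complex.conj_I]

lemma conj_exp_theta' (θ : ℝ) :
    (starRingEnd ℂ) (Complex.exp (-(θ:ℂ) * Complex.I)) = Complex.exp ((θ:ℂ) * Complex.I) := by
  have h := congrArg (starRingEnd ℂ) (conj_exp_theta θ)
  rw [Complex.conj_conj] at h
  exact h.symm

lemma nr_eq_iSup (T : E →L[ℂ] E) :
    nr T = ⨆ θ : ℝ, (1/2) * ‖Complex.exp ((θ:ℂ) * Complex.I) • T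
      + Complex.exp (-(θ:ℂ) * Complex.I) • adjoint T‖ := by
  set g : ℝ → ℝ := fun θ => (1/2) * ‖Complex.exp ((θ:ℂ) * Complex.I) • T
      + Complex.exp (-(θ:ℂ) * Complex.I) • adjoint T‖ with hg
  have hgnn : ∀ θ : ℝ, 0 ≤ g θ := fun θ => by
    simp only [hg]; positivity
  have hgle : ∀ θ : ℝ, g θ ≤ ‖T‖ := fun θ => by
    have h1 := norm_add_le (Complex.exp ((θ:ℂ) * Complex.I) • T)
      (Complex.exp (-(θ:ℂ) * Complex.I) • adjoint T)
    rw [norm_smul, norm_smul, exp_norm_one _ (by simp), exp_norm_one _ (by simp),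
      one_mul, one_mul, LinearIsometryEquiv.norm_map adjoint T] at h1
    simp only [hg]
    linarith
  have hbdd : BddAbove (Set.range g) := ⟨‖T‖, by rintro r ⟨θ, rfl⟩; exact hgle θ⟩
  apply le_antisymm
  · refine Real.iSup_le (fun x => ?_) (Real.iSup_nonneg hgnn)
    obtain ⟨x, hx⟩ := x
    set c : ℂ := ⟪T x, x⟫ with hc
    obtain ⟨θ, hθ⟩ : ∃ θ : ℝ, Complex.exp ((θ:ℂ) * Complex.I) * c = (‖c‖ : ℂ) := by
      refine ⟨-Complex.arg c, ?_⟩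
      have h := Complex.norm_mul_exp_arg_mul_I c
      push_cast
      rw [neg_mul, Complex.exp_neg, inv_mul_eq_iff_eq_mul₀ (Complex.exp_ne_zero _),
        mul_comm]
      exact h.symm
    have hadj : (⟪adjoint T x, x⟫ : ℂ) = (starRingEnd ℂ) c := by
      rw [adjoint_inner_left, ← inner_conj_symm]
    have hθ' := congrArg (starRingEnd ℂ) hθ
    rw [map_mul, conj_exp_theta, Complex.conj_ofReal] at hθ'
    have hS : (⟪(Complex.exp (-(θ:ℂ) * Complex.I) • T
        + Complex.exp ((θ:ℂ) * Complex.I) • adjoint T) x, x⟫ : ℂ) = 2 * ‖c‖ := by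
      simp only [ContinuousLinearMap.add_apply, ContinuousLinearMap.smul_apply,
        inner_add_left, inner_smul_left, hadj, conj_exp_theta, conj_exp_theta']
      rw [← hc]
      linear_combination hθ + hθ'
    have h2 : ‖(⟪(Complex.exp (-(θ:ℂ) * Complex.I) • T
        + Complex.exp ((θ:ℂ) * Complex.I) • adjoint T) x, x⟫ : ℂ)‖
        ≤ ‖Complex.exp (-(θ:ℂ) * Complex.I) • T
        + Complex.exp ((θ:ℂ) * Complex.I) • adjoint T‖ :=
      nr_inner_le_opNorm _ ⟨x, hx⟩
    rw [hS] at h2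
    have h3 : ‖((2 * ‖c‖ : ℝ) : ℂ)‖ = 2 * ‖c‖ := by
      rw [Complex.norm_real, Real.norm_eq_abs, abs_of_nonneg (by positivity)]
    have h4 : ((2 : ℂ) * (‖c‖ : ℂ)) = ((2 * ‖c‖ : ℝ) : ℂ) := by push_cast; ring
    rw [h4, h3] at h2
    have hgθ : g (-θ) = (1/2) * ‖Complex.exp (-(θ:ℂ) * Complex.I) • T
        + Complex.exp ((θ:ℂ) * Complex.I) • adjoint T‖ := by
      simp only [hg, Complex.ofReal_neg, neg_mul, neg_neg]
    have hle1 : ‖c‖ ≤ g (-θ) := by rw [hgθ]; linarith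
    exact hle1.trans (le_ciSup hbdd (-θ))
  · refine Real.iSup_le (fun θ => ?_) (nr_nonneg T)
    set S : E →L[ℂ] E := Complex.exp ((θ:ℂ) * Complex.I) • T
      + Complex.exp (-(θ:ℂ) * Complex.I) • adjoint T with hSdef
    have hsa : IsSelfAdjoint S := by
      rw [isSelfAdjoint_iff', ← star_eq_adjoint, hSdef, star_add, star_smul, star_smul,
        star_eq_adjoint, star_eq_adjoint, adjoint_adjoint,
        RCLike.star_def, conj_exp_theta, conj_exp_theta']
      exact add_comm _ _
    have h1 : ‖S‖ ≤ nr S := IsSelfAdjoint.norm_le_nr S hsa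
    have h2 : nr S ≤ 2 * nr T := by
      refine Real.iSup_le (fun x => ?_) (by linarith [nr_nonneg T])
      obtain ⟨x, hx⟩ := x
      have hadj : (⟪adjoint T x, x⟫ : ℂ) = (starRingEnd ℂ) ⟪T x, x⟫ := by
        rw [adjoint_inner_left, ← inner_conj_symm]
      have hexp : (⟪S x, x⟫ : ℂ) = Complex.exp (-(θ:ℂ) * Complex.I) * ⟪T x, x⟫
          + Complex.exp ((θ:ℂ) * Complex.I) * (starRingEnd ℂ) ⟪T x, x⟫ := by
        simp only [hSdef, ContinuousLinearMap.add_apply, ContinuousLinearMap.smul_apply,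
          inner_add_left, inner_smul_left, hadj, conj_exp_theta, conj_exp_theta']
      calc ‖(⟪S x, x⟫ : ℂ)‖ ≤ ‖Complex.exp (-(θ:ℂ) * Complex.I) * ⟪T x, x⟫‖
            + ‖Complex.exp ((θ:ℂ) * Complex.I) * (starRingEnd ℂ) ⟪T x, x⟫‖ := by
            rw [hexp]; exact norm_add_le _ _
        _ = ‖(⟪T x, x⟫ : ℂ)‖ + ‖(⟪T x, x⟫ : ℂ)‖ := by
            rw [norm_mul, norm_mul, exp_norm_one _ (by simp), exp_norm_one _ (by simp),
              one_mul, one_mul, RCLike.norm_conj]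
        _ ≤ 2 * nr T := by have := le_nr T x hx; linarith
    show (1/2) * ‖S‖ ≤ nr T
    linarith
end Main
section Blk
variable {H : Type*} [NormedAddCommGroup H] [InnerProductSpace ℂ H]
local notation "⟪" x ", " y "⟫" => @inner ℂ _ _ x y

lemma blk_fst (A B C D : H →L[ℂ] H) (x : WithLp 2 (H × H)) :
    (blk A B C D x).fst = A x.fst + B x.snd := rfl

lemma blk_snd (A B C D : H →L[ℂ] H) (x : WithLp 2 (H × H)) :
    (blk A B C D x).snd = C x.fst + D x.snd := rfl

lemma blk_add (A B C D A' B' C' D' : H →L[ℂ] H) :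
    blk A B C D + blk A' B' C' D' = blk (A + A') (B + B') (C + C') (D + D') := by
  refine ContinuousLinearMap.ext fun x => ?_
  refine (WithLp.ext_iff 2).2 (Prod.ext ?_ ?_)
  · show (blk A B C D x).fst + (blk A' B' C' D' x).fst = _
    simp [blk_fst]; abel
  · show (blk A B C D x).snd + (blk A' B' C' D' x).snd = _
    simp [blk_snd]; abel

lemma blk_smul (c : ℂ) (A B C D : H →L[ℂ] H) :
    c • blk A B C D = blk (c • A) (c • B) (c • C) (c • D) := by
  refine ContinuousLinearMap.ext fun x => ?_
  refine (WithLp.ext_iff 2).2 (Prod.ext ?_ ?_)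
  · show c • (blk A B C D x).fst = _
    simp [blk_fst]
  · show c • (blk A B C D x).snd = _
    simp [blk_snd]

lemma blk_smul_real (r : ℝ) (A B C D : H →L[ℂ] H) :
    r • blk A B C D = blk (r • A) (r • B) (r • C) (r • D) := by
  refine ContinuousLinearMap.ext fun x => ?_
  refine (WithLp.ext_iff 2).2 (Prod.ext ?_ ?_)
  · show r • (blk A B C D x).fst = _
    simp [blk_fst]
  · show r • (blk A B C D x).snd = _
    simp [blk_snd]

variable [CompleteSpace H]

lemma blk_adjoint (X Y : H →L[ℂ] H) :
    adjoint (blk 0 X Y 0) = blk 0 (adjoint Y) (adjoint X) 0 := by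
  symm
  rw [eq_adjoint_iff]
  intro u v
  rw [WithLp.prod_inner_apply, WithLp.prod_inner_apply]
  simp only [show ∀ w : WithLp 2 (H × H), w.ofLp.1 = w.fst from fun _ => rfl,
    show ∀ w : WithLp 2 (H × H), w.ofLp.2 = w.snd from fun _ => rfl]
  rw [blk_fst, blk_snd, blk_fst, blk_snd]
  simp only [ContinuousLinearMap.zero_apply, zero_add, add_zero,
    adjoint_inner_left]
  exact add_comm _ _

lemma blk_norm (C : H →L[ℂ] H) : ‖blk 0 C (adjoint C) 0‖ = ‖C‖ := by
  apply le_antisymm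
  · refine opNorm_le_bound _ (norm_nonneg C) fun x => ?_
    rw [WithLp.prod_norm_eq_of_L2, WithLp.prod_norm_eq_of_L2]
    rw [blk_fst, blk_snd]
    simp only [ContinuousLinearMap.zero_apply, zero_add, add_zero]
    rw [show ‖C‖ * √(‖x.fst‖^2 + ‖x.snd‖^2) = √(‖C‖^2 * (‖x.fst‖^2 + ‖x.snd‖^2)) by
      rw [Real.sqrt_mul (by positivity), Real.sqrt_sq (norm_nonneg C)]]
    apply Real.sqrt_le_sqrt
    have h1 := C.le_opNorm x.snd
    have h2 := (adjoint C).le_opNorm x.fst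
    rw [LinearIsometryEquiv.norm_map adjoint C] at h2
    nlinarith [norm_nonneg (C x.snd), norm_nonneg (adjoint C x.fst),
      norm_nonneg x.fst, norm_nonneg x.snd, norm_nonneg C]
  · refine opNorm_le_bound _ (norm_nonneg _) fun v => ?_
    set u : WithLp 2 (H × H) := (WithLp.equiv 2 (H × H)).symm (0, v) with hu
    have hu1 : u.fst = 0 := rfl
    have hu2 : u.snd = v := rfl
    have hun : ‖u‖ = ‖v‖ := by
      rw [WithLp.prod_norm_eq_of_L2, hu1, hu2]
      simp [Real.sqrt_sq (norm_nonneg v)]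
    have hbu : ‖blk 0 C (adjoint C) 0 u‖ = ‖C v‖ := by
      rw [WithLp.prod_norm_eq_of_L2, blk_fst, blk_snd, hu1, hu2]
      simp [Real.sqrt_sq (norm_nonneg (C v))]
    calc ‖C v‖ = ‖blk 0 C (adjoint C) 0 u‖ := hbu.symm
      _ ≤ ‖blk 0 C (adjoint C) 0‖ * ‖u‖ := le_opNorm _ _
      _ = ‖blk 0 C (adjoint C) 0‖ * ‖v‖ := by rw [hun]

end Blk
variable {H : Type*} [NormedAddCommGroup H] [InnerProductSpace ℂ H] [CompleteSpace H]

theorem stmt8 (t : ℝ) (ht : t ∈ Set.Icc (0:ℝ) 1) (X Y : H →L[ℂ] H) :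
    wnr t (blk 0 X Y 0) =
      ⨆ θ : ℝ, (1/2) *
        ‖(1 - 2*t) • (Complex.exp (-(θ:ℂ) * Complex.I) • X
            + Complex.exp ((θ:ℂ) * Complex.I) • adjoint Y)
          + (Complex.exp ((θ:ℂ) * Complex.I) • X
            + Complex.exp (-(θ:ℂ) * Complex.I) • adjoint Y)‖ := by
  set A : H →L[ℂ] H := (1 - 2*t) • adjoint Y + X with hA
  set B : H →L[ℂ] H := (1 - 2*t) • adjoint X + Y with hB
  have hblk : (1 - 2*t) • adjoint (blk 0 X Y 0) + blk 0 X Y 0 = blk 0 A B 0 := by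
    rw [blk_adjoint, blk_smul_real, blk_add]
    simp only [smul_zero, add_zero, zero_add]
    rfl
  show nr ((1 - 2*t) • adjoint (blk 0 X Y 0) + blk 0 X Y 0) = _
  rw [hblk, nr_eq_iSup]
  refine iSup_congr fun θ => ?_
  have h1 : Complex.exp ((θ:ℂ) * Complex.I) • blk 0 A B 0
      + Complex.exp (-(θ:ℂ) * Complex.I) • adjoint (blk 0 A B 0)
      = blk 0 (Complex.exp ((θ:ℂ) * Complex.I) • A
            + Complex.exp (-(θ:ℂ) * Complex.I) • adjoint B)
          (Complex.exp ((θ:ℂ) * Complex.I) • B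
            + Complex.exp (-(θ:ℂ) * Complex.I) • adjoint A) 0 := by
    rw [blk_adjoint, blk_smul, blk_smul, blk_add]
    simp only [smul_zero, add_zero, zero_add]
  rw [h1]
  have h2 : Complex.exp ((θ:ℂ) * Complex.I) • B + Complex.exp (-(θ:ℂ) * Complex.I) • adjoint A
      = adjoint (Complex.exp ((θ:ℂ) * Complex.I) • A
          + Complex.exp (-(θ:ℂ) * Complex.I) • adjoint B) := by
    conv_rhs => rw [← star_eq_adjoint, star_add, star_smul, star_smul, star_eq_adjoint,
      star_eq_adjoint, adjoint_adjoint, RCLike.star_def, conj_exp_theta, conj_exp_theta']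
    exact add_comm _ _
  rw [h2, blk_norm]
  congr 1
  have hBadj : adjoint B = (1 - 2*t) • X + adjoint Y := by
    rw [hB, ← Complex.coe_smul, ← star_eq_adjoint, star_add, star_smul, star_eq_adjoint,
      star_eq_adjoint, adjoint_adjoint, RCLike.star_def, Complex.conj_ofReal,
      Complex.coe_smul]
  rw [hA, hBadj]
  simp only [← Complex.coe_smul]
  congr 1
  module
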